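/- Let p, q be polynomials with p represented by q (i.e. p(T²) = T^{deg q} q(T+T^{−1})) and p self-reciprocal. Then all roots of p lie on the unit circle S¹ if and only if all roots of q are real and lie in the interval [−2, 2]. -/

import Mathlib

open Polynomial


theorem aux_quad_abs {z : ℂ} {l : ℝ} (hl1 : -2 ≤ l) (hl2 : l ≤ 2)
    (h : z ^ 2 + 1 = (l : ℂ) * z) : ‖z‖ = 1 := by
  have hre := congrArg Complex.re h
  have him := congrArg Complex.im h
  simp [pow_two, Complex.mul_re, Complex.mul_im] at hre him
  set a := z.re with ha; set b := z.im with hb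
  have hns : Complex.normSq z = 1 := by
    rw [Complex.normSq_apply, ← ha, ← hb]
    have hfac : b * (2 * a - l) = 0 := by nlinarith [him]
    rcases mul_eq_zero.1 hfac with h0 | h0
    · have hre' : a ^ 2 + 1 = l * a := by rw [h0] at hre; ring_nf at hre ⊢; linarith [hre]
      have h1 : (a ^ 2 - 1) ^ 2 = a ^ 2 * (l ^ 2 - 4) := by
        linear_combination (a ^ 2 + 1 + l * a) * hre'
      have h3 : (a ^ 2 - 1) ^ 2 = 0 := le_antisymm (by nlinarith [mul_nonneg (sq_nonneg a) (show (0:ℝ) ≤ 4 - l ^ 2 by nlinarith)]) (sq_nonneg _)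
      have h2 : a ^ 2 = 1 := by have := sq_eq_zero_iff.mp h3; linarith
      nlinarith [h2]
    · nlinarith [hre]
  rw [Complex.norm_def, hns, Real.sqrt_one]


/-- Let `p`, `q` be polynomials with `p` represented by `q`
(`p(T²) = T^{deg q}·q(T + T⁻¹)`) and `p` self-reciprocal. Then all roots of `p`
lie on the unit circle `S¹` if and only if all roots of `q` are real and lie
in the interval `[-2, 2]`. -/
theorem roots_on_circle_iff_roots_in_Icc
    (p q : Polynomial ℂ) (hp : p ≠ 0) (hq : q ≠ 0)
    (hself : ∀ z : ℂ, z ≠ 0 → z ^ p.natDegree * p.eval z⁻¹ = p.eval z)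
    (hrep : ∀ z : ℂ, z ≠ 0 → p.eval (z ^ 2) = z ^ q.natDegree * q.eval (z + z⁻¹)) :
    (∀ μ : ℂ, p.IsRoot μ → ‖μ‖ = 1) ↔
      (∀ lam : ℂ, q.IsRoot lam → lam.im = 0 ∧ -2 ≤ lam.re ∧ lam.re ≤ 2) := by

  -- p has nonzero constant term
  have hp0 : p.eval 0 ≠ 0 := by
    have hpr : reflect p.natDegree p = p := by
      apply Polynomial.eq_of_infinite_eval_eq
      apply Set.Infinite.mono (s := {(0:ℂ)}ᶜ) _ ((Set.finite_singleton 0).infinite_compl)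
      intro w hw
      have hw0 : w ≠ 0 := hw
      have hwi : w⁻¹ ≠ 0 := inv_ne_zero hw0
      letI : Invertible (w⁻¹) := invertibleOfNonzero hwi
      have h1 := eval₂_reflect_mul_pow (RingHom.id ℂ) (w⁻¹) p.natDegree p le_rfl
      rw [invOf_eq_inv, inv_inv] at h1
      have h1' : (reflect p.natDegree p).eval w * (w⁻¹) ^ p.natDegree = p.eval w⁻¹ := h1
      have h2 := hself w⁻¹ hwi
      rw [inv_inv] at h2
      have h3 : (reflect p.natDegree p).eval w * (w⁻¹) ^ p.natDegree
          = (w⁻¹) ^ p.natDegree * p.eval w := by rw [h1', ← h2]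
      have h4 : (w⁻¹ : ℂ) ^ p.natDegree ≠ 0 := pow_ne_zero _ hwi
      simp only [Set.mem_setOf_eq]
      rw [mul_comm] at h3
      exact mul_left_cancel₀ h4 h3
    have hc : p.eval 0 = p.leadingCoeff := by
      rw [← coeff_zero_eq_eval_zero]
      conv_lhs => rw [← hpr]
      rw [coeff_reflect, revAt_le (Nat.zero_le p.natDegree), Nat.sub_zero, coeff_natDegree]
    rw [hc]
    exact leadingCoeff_ne_zero.mpr hp
  constructor
  · -- forward
    intro h lam hlam
    obtain ⟨z, hz0⟩ : ∃ z : ℂ, z ^ 2 - lam * z + 1 = 0 := by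
      have hdeg : (X ^ 2 - C lam * X + 1 : ℂ[X]).degree = 2 := by compute_degree!
      obtain ⟨z, hz⟩ := Complex.exists_root (f := X ^ 2 - C lam * X + 1) (by rw [hdeg]; norm_num)
      exact ⟨z, by simpa [IsRoot] using hz⟩
    have hzne : z ≠ 0 := by rintro rfl; simp at hz0
    have hsum : z + z⁻¹ = lam := by field_simp; linear_combination hz0
    have hroot : p.IsRoot (z ^ 2) := by
      have := hrep z hzne
      rw [hsum, hlam] at this
      simpa [IsRoot] using this
    have habs : ‖z‖ = 1 := by
      have h1 : ‖z‖ ^ 2 = 1 := by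
        have := h _ hroot; rwa [norm_pow] at this
      nlinarith [norm_nonneg z, h1]
    have hconj : z⁻¹ = (starRingEnd ℂ) z := by
      have : z * (starRingEnd ℂ) z = 1 := by
        rw [Complex.mul_conj]
        norm_cast
        rw [Complex.normSq_eq_norm_sq, habs]; norm_num
      field_simp
      linear_combination -this
    rw [← hsum, hconj]
    have h1 := Complex.abs_re_le_norm z
    rw [habs] at h1
    have h2 := abs_le.mp h1
    refine ⟨by simp, ?_, ?_⟩ <;> simp only [Complex.add_re, Complex.conj_re]
    · linarith [h2.1]
    · linarith [h2.2]
  · -- backward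
    intro h mu hmu
    have hmu0 : mu ≠ 0 := by rintro rfl; exact hp0 hmu
    obtain ⟨z, rfl⟩ := IsAlgClosed.exists_pow_nat_eq mu (n := 2) (by norm_num)
    have hzne : z ≠ 0 := by rintro rfl; simp at hmu0
    have hqroot : q.IsRoot (z + z⁻¹) := by
      have h1 := hrep z hzne
      rw [hmu] at h1
      have h2 : z ^ q.natDegree ≠ 0 := pow_ne_zero _ hzne
      have := (mul_eq_zero.mp h1.symm).resolve_left h2
      exact this
    obtain ⟨him, hl1, hl2⟩ := h _ hqroot
    have hlre : (z + z⁻¹) = ((z + z⁻¹).re : ℂ) := by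
      exact (Complex.ext (by simp) (by simp [him])).symm
    have hquad : z ^ 2 + 1 = (((z + z⁻¹).re : ℝ) : ℂ) * z := by
      rw [← hlre]; field_simp
    have := aux_quad_abs hl1 hl2 hquad
    rw [norm_pow, this]; norm_num
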